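/- Every complex homogeneous cubic polynomial p(x,y,z) of degree exactly 3 admits a determinantal representation with 3×3 complex matrices: there exist A, B, C ∈ M_3(C) with det(xA + yB + zC) = p(x,y,z). -/

import Mathlib

open MvPolynomial

set_option maxHeartbeats 1000000 in
private lemma key3 (n0 n1 n2 : ℕ) (hn : n0+n1+n2 = 3) (a : ℂ) :
      ∃ c300 c210 c201 c120 c111 c102 c030 c021 c012 c003 : ℂ, ∀ x y z : ℂ,
      a * x^n0 * y^n1 * z^n2 = c300*x^3 + c210*x^2*y + c201*x^2*z + c120*x*y^2 + c111*x*y*z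
        + c102*x*z^2 + c030*y^3 + c021*y^2*z + c012*y*z^2 + c003*z^3 := by
  have h0 : n0 ≤ 3 := by omega
  have h1 : n1 ≤ 3 := by omega
  have h2 : n2 ≤ 3 := by omega
  interval_cases n0 <;> interval_cases n1 <;> interval_cases n2 <;>
  first
    | (exfalso; omega)
    | (refine ⟨a,0,0,0,0,0,0,0,0,0, fun x y z => ?_⟩; ring1)
    | (refine ⟨0,a,0,0,0,0,0,0,0,0, fun x y z => ?_⟩; ring1)
    | (refine ⟨0,0,a,0,0,0,0,0,0,0, fun x y z => ?_⟩; ring1)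
    | (refine ⟨0,0,0,a,0,0,0,0,0,0, fun x y z => ?_⟩; ring1)
    | (refine ⟨0,0,0,0,a,0,0,0,0,0, fun x y z => ?_⟩; ring1)
    | (refine ⟨0,0,0,0,0,a,0,0,0,0, fun x y z => ?_⟩; ring1)
    | (refine ⟨0,0,0,0,0,0,a,0,0,0, fun x y z => ?_⟩; ring1)
    | (refine ⟨0,0,0,0,0,0,0,a,0,0, fun x y z => ?_⟩; ring1)
    | (refine ⟨0,0,0,0,0,0,0,0,a,0, fun x y z => ?_⟩; ring1)
    | (refine ⟨0,0,0,0,0,0,0,0,0,a, fun x y z => ?_⟩; ring1)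

private lemma structure3 (p : MvPolynomial (Fin 3) ℂ) (hhom : p.IsHomogeneous 3) :
    ∃ c300 c210 c201 c120 c111 c102 c030 c021 c012 c003 : ℂ, ∀ x y z : ℂ,
      eval ![x,y,z] p = c300*x^3 + c210*x^2*y + c201*x^2*z + c120*x*y^2 + c111*x*y*z
        + c102*x*z^2 + c030*y^3 + c021*y^2*z + c012*y*z^2 + c003*z^3 := by
  have hrep := p.support_sum_monomial_coeff
  rw [← hrep]
  apply Finset.sum_induction _ (fun q : MvPolynomial (Fin 3) ℂ =>
    ∃ c300 c210 c201 c120 c111 c102 c030 c021 c012 c003 : ℂ, ∀ x y z : ℂ,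
      eval ![x,y,z] q = c300*x^3 + c210*x^2*y + c201*x^2*z + c120*x*y^2 + c111*x*y*z
        + c102*x*z^2 + c030*y^3 + c021*y^2*z + c012*y*z^2 + c003*z^3)
  · rintro a b ⟨a1,a2,a3,a4,a5,a6,a7,a8,a9,a10,ha⟩ ⟨b1,b2,b3,b4,b5,b6,b7,b8,b9,b10,hb⟩
    exact ⟨a1+b1,a2+b2,a3+b3,a4+b4,a5+b5,a6+b6,a7+b7,a8+b8,a9+b9,a10+b10, fun x y z => by
      simp only [map_add, ha, hb]; ring⟩
  · exact ⟨0,0,0,0,0,0,0,0,0,0, fun x y z => by simp⟩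
  · intro d hd
    have hc : coeff d p ≠ 0 := mem_support_iff.mp hd
    have hdeg : d.degree = 3 := by
      have := hhom hc
      rw [Finsupp.degree_eq_weight_one]; exact this
    have hsum : d 0 + d 1 + d 2 = 3 := by
      have h2 : d.degree = ∑ i : Fin 3, d i :=
        Finset.sum_subset (Finset.subset_univ d.support) (fun i _ hi =>
          Finsupp.notMem_support_iff.mp hi)
      rw [h2, Fin.sum_univ_three] at hdeg
      exact hdeg
    have heval : ∀ x y z : ℂ, eval ![x,y,z] (monomial d (coeff d p))
        = coeff d p * x ^ d 0 * y ^ d 1 * z ^ d 2 := by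
      intro x y z
      rw [eval_monomial]
      have h3 : (d.prod fun i k => (![x,y,z]) i ^ k) = ∏ i : Fin 3, (![x,y,z]) i ^ d i :=
        Finsupp.prod_fintype _ _ (by simp)
      rw [h3, Fin.prod_univ_three]
      simp [mul_assoc]
    obtain ⟨c1,c2,c3,c4,c5,c6,c7,c8,c9,c10,hk⟩ := key3 (d 0) (d 1) (d 2) hsum (coeff d p)
    exact ⟨c1,c2,c3,c4,c5,c6,c7,c8,c9,c10, fun x y z => by rw [heval]; exact hk x y z⟩

private lemma quad_factor (s1 s2 s3 : ℂ) : ∃ b1 b2 g1 g2 : ℂ, ∀ y z : ℂ,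
    s1*y^2 + s2*y*z + s3*z^2 = (b1*y + b2*z) * (g1*y + g2*z) := by
  by_cases h1 : s1 = 0
  · exact ⟨0, 1, s2, s3, fun y z => by subst h1; ring⟩
  · obtain ⟨δ, hδ⟩ := IsAlgClosed.exists_pow_nat_eq (k := ℂ) (s2^2 - 4*s1*s3) (n := 2) (by norm_num)
    refine ⟨s1, (s2 - δ)/2, 1, (s2 + δ)/(2*s1), fun y z => ?_⟩
    field_simp
    linear_combination z^2 * hδ

private lemma quad_root_factor (r1 r2 r3 y0 z0 : ℂ) (h0 : y0 ≠ 0 ∨ z0 ≠ 0)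
    (hroot : r1*y0^2 + r2*y0*z0 + r3*z0^2 = 0) :
    ∃ h1 h2 : ℂ, ∀ y z : ℂ, r1*y^2 + r2*y*z + r3*z^2 = (z0*y - y0*z) * (h1*y + h2*z) := by
  by_cases hz : z0 = 0
  · have hy : y0 ≠ 0 := by tauto
    subst hz
    have hr1 : r1 = 0 := by
      have h : r1 * y0^2 = 0 := by linear_combination hroot
      rcases mul_eq_zero.mp h with h | h
      · exact h
      · exact absurd h (pow_ne_zero 2 hy)
    refine ⟨-r2/y0, -r3/y0, fun y z => ?_⟩
    subst hr1; field_simp; ring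
  · refine ⟨r1/z0, (r2*z0 + r1*y0)/z0^2, fun y z => ?_⟩
    field_simp
    linear_combination z^2 * hroot

private lemma cubic_factor (k0 k1 k2 k3 : ℂ) : ∃ y0 z0 s1 s2 s3 : ℂ, (y0 ≠ 0 ∨ z0 ≠ 0) ∧
    ∀ y z : ℂ, k0*y^3 + k1*y^2*z + k2*y*z^2 + k3*z^3
      = (z0*y - y0*z) * (s1*y^2 + s2*y*z + s3*z^2) := by
  by_cases h0 : k0 = 0
  · exact ⟨1, 0, -k1, -k2, -k3, Or.inl one_ne_zero, fun y z => by subst h0; ring⟩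
  · obtain ⟨r, hr⟩ := IsAlgClosed.exists_root (k := ℂ) (Polynomial.C k0 * Polynomial.X^3
      + Polynomial.C k1 * Polynomial.X^2 + Polynomial.C k2 * Polynomial.X + Polynomial.C k3)
      (by rw [Polynomial.degree_cubic h0]; norm_num)
    have hr' : k0*r^3 + k1*r^2 + k2*r + k3 = 0 := by
      have := hr
      simp [Polynomial.IsRoot, Polynomial.eval_add, Polynomial.eval_mul,
        Polynomial.eval_pow] at this
      linear_combination this
    refine ⟨r, 1, k0, k1 + r*k0, k2 + r*k1 + r^2*k0, Or.inr one_ne_zero, fun y z => ?_⟩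
    linear_combination z^3 * hr'

private lemma main1 (c300 c210 c201 c120 c111 c102 c030 c021 c012 c003 : ℂ) (hl : c300 ≠ 0) :
    ∃ A B D : Matrix (Fin 3) (Fin 3) ℂ, ∀ x y z : ℂ,
      (Matrix.of fun i j => A i j * x + B i j * y + D i j * z).det
        = c300*x^3 + c210*x^2*y + c201*x^2*z + c120*x*y^2 + c111*x*y*z
          + c102*x*z^2 + c030*y^3 + c021*y^2*z + c012*y*z^2 + c003*z^3 := by
  obtain ⟨y0, z0, s1, s2, s3, hyz, hK⟩ := cubic_factor c030 c021 c012 c003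
  obtain ⟨b1, b2, g1, g2, hS⟩ := quad_factor s1 s2 s3
  set L0 := c210*y0 + c201*z0 with hL0
  set q0 := c120*y0^2 + c111*y0*z0 + c102*z0^2 with hq0
  obtain ⟨δ, hδ⟩ := IsAlgClosed.exists_pow_nat_eq (k := ℂ) (L0^2 - 4*c300*q0) (n := 2) (by norm_num)
  set i0 := (L0 + δ)/(2*c300) with hi0
  have h2c : 2*c300*i0 = L0 + δ := by
    rw [hi0]; field_simp
  have hquad : c300*i0^2 - L0*i0 + q0 = 0 := by
    have h4 : (4*c300) * (c300*i0^2 - L0*i0 + q0) = 0 := by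
      linear_combination (2*c300*i0 - L0 + δ)*h2c + hδ
    exact (mul_eq_zero.mp h4).resolve_left (mul_ne_zero (by norm_num) hl)
  obtain ⟨i1, i2, hi⟩ : ∃ i1 i2 : ℂ, i1*y0 + i2*z0 = i0 := by
    rcases hyz with hy | hz
    · exact ⟨i0/y0, 0, by field_simp; ring⟩
    · exact ⟨0, i0/z0, by field_simp; ring⟩
  have hroot : (((c210 - c300*i1)*i1 - c120))*y0^2
      + ((c210 - c300*i1)*i2 + (c201 - c300*i2)*i1 - c111)*y0*z0
      + ((c201 - c300*i2)*i2 - c102)*z0^2 = 0 := by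
    linear_combination (L0 - c300*(i1*y0 + i2*z0 + i0)) * hi - hquad
  obtain ⟨h1, h2, hR⟩ := quad_root_factor _ _ _ y0 z0 hyz hroot
  refine ⟨!![1,0,0; 0,c300,0; 0,0,1], !![0,b1,0; 0,c210 - c300*i1,z0; g1,h1,i1],
          !![0,b2,0; 0,c201 - c300*i2,-y0; g2,h2,i2], fun x y z => ?_⟩
  rw [Matrix.det_fin_three]
  simp only [Matrix.of_apply, Matrix.cons_val', Matrix.cons_val_zero, Matrix.cons_val_one,
    Matrix.head_cons, Matrix.empty_val', Matrix.cons_val_fin_one, Matrix.head_fin_const,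
    Matrix.cons_val_two, Matrix.tail_cons]
  linear_combination x * (hR y z) - (z0*y - y0*z) * (hS y z) - (hK y z)

private lemma main2 (c300 c210 c201 c120 c111 c102 c030 c021 c012 c003 : ℂ) (t s : ℂ)
    (hts : c300 + c210*t + c201*s + c120*t^2 + c111*t*s + c102*s^2 + c030*t^3
      + c021*t^2*s + c012*t*s^2 + c003*s^3 ≠ 0) :
    ∃ A B D : Matrix (Fin 3) (Fin 3) ℂ, ∀ x y z : ℂ,
      (Matrix.of fun i j => A i j * x + B i j * y + D i j * z).det
        = c300*x^3 + c210*x^2*y + c201*x^2*z + c120*x*y^2 + c111*x*y*z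
          + c102*x*z^2 + c030*y^3 + c021*y^2*z + c012*y*z^2 + c003*z^3 := by
  obtain ⟨A', B', D', h'⟩ := main1
    (c300 + c210*t + c201*s + c120*t^2 + c111*t*s + c102*s^2 + c030*t^3
      + c021*t^2*s + c012*t*s^2 + c003*s^3)
    (c210 + 2*c120*t + c111*s + 3*c030*t^2 + 2*c021*t*s + c012*s^2)
    (c201 + c111*t + 2*c102*s + c021*t^2 + 2*c012*t*s + 3*c003*s^2)
    (c120 + 3*c030*t + c021*s)
    (c111 + 2*c021*t + 2*c012*s)
    (c102 + c012*t + 3*c003*s)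
    c030 c021 c012 c003 hts
  refine ⟨A' - t•B' - s•D', B', D', fun x y z => ?_⟩
  have hM : (Matrix.of fun i j => (A' - t•B' - s•D') i j * x + B' i j * y + D' i j * z)
      = (Matrix.of fun i j => A' i j * x + B' i j * (y - t*x) + D' i j * (z - s*x)) := by
    ext i j
    simp only [Matrix.of_apply, Matrix.sub_apply, Matrix.smul_apply, smul_eq_mul]
    ring
  rw [hM]
  linear_combination h' x (y - t*x) (z - s*x)

private lemma cubic1_zero (a0 a1 a2 a3 : ℂ) (h : ∀ t : ℂ, a0 + a1*t + a2*t^2 + a3*t^3 = 0) :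
    a0 = 0 ∧ a1 = 0 ∧ a2 = 0 ∧ a3 = 0 := by
  have h0 := h 0; have h1 := h 1; have h2 := h (-1); have h3 := h 2
  refine ⟨by linear_combination h0,
    by linear_combination (-1/2 : ℂ)*h0 + h1 - (1/3 : ℂ)*h2 - (1/6 : ℂ)*h3,
    by linear_combination (-1 : ℂ)*h0 + (1/2 : ℂ)*h1 + (1/2 : ℂ)*h2,
    by linear_combination (1/2 : ℂ)*h0 - (1/2 : ℂ)*h1 - (1/6 : ℂ)*h2 + (1/6 : ℂ)*h3⟩

theorem stmt9 (p : MvPolynomial (Fin 3) ℂ) (hhom : p.IsHomogeneous 3) (h0 : p ≠ 0) :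
    ∃ A B D : Matrix (Fin 3) (Fin 3) ℂ,
      (Matrix.of fun i j => C (A i j) * X 0 + C (B i j) * X 1 + C (D i j) * X 2).det = p := by
  obtain ⟨c300, c210, c201, c120, c111, c102, c030, c021, c012, c003, hp⟩ := structure3 p hhom
  have hex : ∃ t s : ℂ, c300 + c210*t + c201*s + c120*t^2 + c111*t*s + c102*s^2 + c030*t^3
      + c021*t^2*s + c012*t*s^2 + c003*s^3 ≠ 0 := by
    by_contra hall
    push_neg at hall
    have kk : ∀ s : ℂ, (c300 + c201*s + c102*s^2 + c003*s^3 = 0)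
        ∧ (c210 + c111*s + c012*s^2 = 0) ∧ (c120 + c021*s = 0) ∧ (c030 = 0) := by
      intro s
      have := cubic1_zero (c300 + c201*s + c102*s^2 + c003*s^3) (c210 + c111*s + c012*s^2)
        (c120 + c021*s) c030 (fun t => by linear_combination hall t s)
      exact this
    obtain ⟨e300, e201, e102, e003⟩ := cubic1_zero _ _ _ _ (fun s => (kk s).1)
    obtain ⟨e210, e111, e012, -⟩ := cubic1_zero c210 c111 c012 0
      (fun s => by linear_combination (kk s).2.1)
    obtain ⟨e120, e021, -, -⟩ := cubic1_zero c120 c021 0 0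
      (fun s => by linear_combination (kk s).2.2.1)
    have e030 : c030 = 0 := (kk 0).2.2.2
    apply h0
    apply MvPolynomial.funext
    intro v
    have hv : v = ![v 0, v 1, v 2] := by
      funext i; fin_cases i <;> rfl
    rw [hv, hp (v 0) (v 1) (v 2)]
    simp [e300, e210, e201, e120, e111, e102, e030, e021, e012, e003]
  obtain ⟨t, s, hts⟩ := hex
  obtain ⟨A, B, D, hdet⟩ := main2 c300 c210 c201 c120 c111 c102 c030 c021 c012 c003 t s hts
  refine ⟨A, B, D, MvPolynomial.funext fun v => ?_⟩
  have hv : v = ![v 0, v 1, v 2] := by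
    funext i; fin_cases i <;> rfl
  have hd := hdet (v 0) (v 1) (v 2)
  rw [Matrix.det_fin_three] at hd ⊢
  simp only [Matrix.of_apply, map_add, map_mul, map_sub, eval_C, eval_X] at hd ⊢
  rw [show eval v p = eval ![v 0, v 1, v 2] p by rw [← hv], hp (v 0) (v 1) (v 2)]
  linear_combination hd
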